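/- Let A₁, …, A₁₄ be i.i.d. ℕ-valued random variables each with Poisson distribution of rate 1919, and let d₁, …, d₁₄ be nonnegative real-valued random variables with ∑ₜ₌₁..₁₄ dₜ ≤ 28800 almost surely. Define b₀ = 0 and bₜ = max(0, bₜ₋₁ + Aₜ + 2400 − 1920 − dₜ) for 1 ≤ t ≤ 14. Then E[f(b₁₄)] ≥ 19/20, where f is the cost function; consequently the defender's expected long-term reward −E[supₜ f(bₜ)] is at most −0.95. -/

import Mathlib

open MeasureTheory

/-- A ℕ-valued random variable `S` on a probability space `(Ω, P)` has Poisson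
distribution with rate `lam > 0` if `P(S = n) = exp(-lam) * lam^n / n!` for every `n`. -/
def HasPoissonDistribution {Ω : Type*} [MeasurableSpace Ω] (P : Measure Ω)
    (S : Ω → ℕ) (lam : ℝ) : Prop :=
  ∀ n : ℕ, P {ω | S ω = n} = ENNReal.ofReal (Real.exp (-lam) * lam ^ n / n.factorial)

/-- The cost function `f` of the CSOC model: `f x = 0` for `x ≤ 1175`,
`f x = (x - 1175)/(4350 - 1175)` for `1175 < x < 4350`, and `f x = 1` for `x ≥ 4350`. -/
noncomputable def costf (x : ℝ) : ℝ :=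
  if x ≤ 1175 then 0 else if x < 4350 then (x - 1175) / (4350 - 1175) else 1

namespace CSOC

noncomputable def pp (n : ℕ) : ℝ := Real.exp (-1919) * 1919 ^ n / n.factorial

lemma pp_nonneg (n : ℕ) : 0 ≤ pp n := by unfold pp; positivity

lemma hasSum_exp (r : ℝ) : HasSum (fun n : ℕ => r ^ n / n.factorial) (Real.exp r) := by
  rw [Real.exp_eq_exp_ℝ]
  exact NormedSpace.expSeries_div_hasSum_exp r

lemma hs1 : HasSum (fun n : ℕ => (n : ℝ) * pp n) 1919 := by
  have h := (hasSum_exp 1919).mul_left (1919 * Real.exp (-1919))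
  have e : 1919 * Real.exp (-1919) * Real.exp 1919 = 1919 := by
    rw [mul_assoc, ← Real.exp_add]; norm_num
  rw [e] at h
  have heq : ∀ n : ℕ, ((n + 1 : ℕ) : ℝ) * pp (n + 1)
      = 1919 * Real.exp (-1919) * ((1919:ℝ) ^ n / n.factorial) := by
    intro n
    unfold pp
    have h2 : ((n.factorial : ℝ)) ≠ 0 := Nat.cast_ne_zero.mpr (Nat.factorial_ne_zero n)
    rw [Nat.factorial_succ]
    push_cast
    field_simp
    ring
  have h' : HasSum (fun n : ℕ => ((n + 1 : ℕ) : ℝ) * pp (n + 1)) 1919 := by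
    simp only [heq]; exact h
  have := (hasSum_nat_add_iff (f := fun n : ℕ => (n : ℝ) * pp n) 1).mp h'
  simpa using this

lemma hs2 : HasSum (fun n : ℕ => (n : ℝ) * ((n : ℝ) - 1) * pp n) (1919 ^ 2) := by
  have h := (hasSum_exp 1919).mul_left (1919 ^ 2 * Real.exp (-1919))
  have e : 1919 ^ 2 * Real.exp (-1919) * Real.exp 1919 = 1919 ^ 2 := by
    rw [mul_assoc, ← Real.exp_add]; norm_num
  rw [e] at h
  have heq : ∀ n : ℕ, ((n + 2 : ℕ) : ℝ) * (((n + 2 : ℕ) : ℝ) - 1) * pp (n + 2)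
      = 1919 ^ 2 * Real.exp (-1919) * ((1919:ℝ) ^ n / n.factorial) := by
    intro n
    unfold pp
    have h2 : ((n.factorial : ℝ)) ≠ 0 := Nat.cast_ne_zero.mpr (Nat.factorial_ne_zero n)
    rw [Nat.factorial_succ, Nat.factorial_succ]
    push_cast
    field_simp
    ring
  have h' : HasSum (fun n : ℕ => ((n + 2 : ℕ) : ℝ) * (((n + 2 : ℕ) : ℝ) - 1) * pp (n + 2))
      (1919 ^ 2) := by
    simp only [heq]; exact h
  have := (hasSum_nat_add_iff
    (f := fun n : ℕ => (n : ℝ) * ((n : ℝ) - 1) * pp n) 2).mp h'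
  simpa [Finset.sum_range_succ] using this

lemma hs2' : HasSum (fun n : ℕ => (n : ℝ) ^ 2 * pp n) (1919 ^ 2 + 1919) := by
  have h := hs2.add hs1
  have e : (fun n : ℕ => (n : ℝ) * ((n : ℝ) - 1) * pp n + (n : ℝ) * pp n)
      = fun n : ℕ => (n : ℝ) ^ 2 * pp n := by
    funext n; ring
  rwa [e] at h

lemma exp_eq {Ω : Type*} [MeasurableSpace Ω] (P : Measure Ω) {X : Ω → ℕ} (hX : Measurable X)
    (hp : ∀ n, P {ω | X ω = n} = ENNReal.ofReal (pp n)) (φ : ℕ → ℝ) (hφ0 : ∀ n, 0 ≤ φ n)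
    {c : ℝ} (hsum : HasSum (fun n => φ n * pp n) c) :
    Integrable (fun ω => φ (X ω)) P ∧ ∫ ω, φ (X ω) ∂P = c := by
  set μ := P.map X with hμ
  have hμs : ∀ n, μ {n} = ENNReal.ofReal (pp n) := by
    intro n
    rw [hμ, Measure.map_apply hX (measurableSet_singleton n)]
    exact hp n
  have hterm : ∀ n : ℕ, 0 ≤ φ n * pp n := fun n => mul_nonneg (hφ0 n) (pp_nonneg n)
  have hint : Integrable φ μ := by
    refine ⟨measurable_from_nat.aestronglyMeasurable, ?_⟩
    rw [hasFiniteIntegral_iff_ofReal (Filter.Eventually.of_forall fun n => hφ0 n),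
      lintegral_countable']
    have : ∀ n : ℕ, ENNReal.ofReal (φ n) * μ {n} = ENNReal.ofReal (φ n * pp n) := by
      intro n
      rw [hμs n, ← ENNReal.ofReal_mul (hφ0 n)]
    rw [tsum_congr this, ← ENNReal.ofReal_tsum_of_nonneg hterm hsum.summable]
    exact ENNReal.ofReal_lt_top
  have hcomp : Integrable (fun ω => φ (X ω)) P :=
    (integrable_map_measure measurable_from_nat.aestronglyMeasurable
      hX.aemeasurable).mp (hμ ▸ hint)
  refine ⟨hcomp, ?_⟩
  rw [show ∫ ω, φ (X ω) ∂P = ∫ n, φ n ∂μ from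
    (integral_map hX.aemeasurable measurable_from_nat.aestronglyMeasurable).symm]
  rw [integral_countable' hint]
  rw [tsum_congr (fun n => by
    rw [measureReal_def, hμs n, ENNReal.toReal_ofReal (pp_nonneg n), smul_eq_mul, mul_comm])]
  exact hsum.tsum_eq

lemma costf_nonneg (x : ℝ) : 0 ≤ costf x := by
  unfold costf
  split_ifs with h1 h2
  · exact le_refl 0
  · have : (1175:ℝ) < x := lt_of_not_ge h1
    apply div_nonneg <;> linarith
  · norm_num

lemma costf_le_one (x : ℝ) : costf x ≤ 1 := by
  unfold costf
  split_ifs with h1 h2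
  · norm_num
  · rw [div_le_one (by norm_num)]; linarith
  · exact le_refl 1

lemma costf_measurable : Measurable costf := by
  unfold costf
  apply Measurable.ite (measurableSet_le measurable_id measurable_const) measurable_const
  exact Measurable.ite (measurableSet_lt measurable_id measurable_const)
    ((measurable_id.sub measurable_const).div_const _) measurable_const

lemma costf_lb {x y : ℝ} (h : y ≤ x) : 1 - (4786 - y) ^ 2 / 1384300 ≤ costf x := by
  unfold costf
  split_ifs with h1 h2
  · nlinarith [sq_nonneg (1175 - y)]
  · have h3 : (4786 - x) ^ 2 ≤ (4786 - y) ^ 2 := by nlinarith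
    nlinarith [sq_nonneg (x - 4568)]
  · have : (0:ℝ) ≤ (4786 - y) ^ 2 / 1384300 := by positivity
    linarith

end CSOC

/-- Theorem 1(a): with i.i.d. Poisson(1919) hourly arrivals, an attacker dumping 2400
extra alerts in each of the first 14 hours, nominal service 1920 alerts/hour, and any
defender allocations summing to at most 28800, the expected cost of the final backlog
is at least 19/20; consequently the defender's long-term reward `-E[sup_t f(b t)]`
is at most `-0.95`. -/


theorem attacker_budget_advantage {Ω : Type*} [MeasurableSpace Ω] (P : Measure Ω)
    [IsProbabilityMeasure P]
    (A : Fin 14 → Ω → ℕ) (d : Fin 14 → Ω → ℝ)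
    (hAmeas : ∀ i, Measurable (A i))
    (hindep : ProbabilityTheory.iIndepFun A P)
    (hpois : ∀ i, HasPoissonDistribution P (A i) 1919)
    (hdmeas : ∀ i, Measurable (d i))
    (hd0 : ∀ i ω, 0 ≤ d i ω)
    (hdsum : ∀ᵐ ω ∂P, ∑ i, d i ω ≤ 28800)
    (b : ℕ → Ω → ℝ)
    (hbmeas : ∀ t, Measurable (b t))
    (hb0 : ∀ ω, b 0 ω = 0)
    (hb : ∀ t : Fin 14, ∀ ω,
      b (t + 1) ω = max 0 (b t ω + A t ω + 2400 - 1920 - d t ω)) :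
    19 / 20 ≤ ∫ ω, costf (b 14 ω) ∂P ∧
      -∫ ω, (⨆ t : Fin 14, costf (b (t + 1) ω)) ∂P ≤ -0.95 := by
  classical
  have hpp : ∀ i n, P {ω | A i ω = n} = ENNReal.ofReal (CSOC.pp n) := fun i n => hpois i n
  have hE1 : ∀ i, Integrable (fun ω => (A i ω : ℝ)) P ∧ ∫ ω, (A i ω : ℝ) ∂P = 1919 :=
    fun i => CSOC.exp_eq P (hAmeas i) (hpp i) (fun n => (n : ℝ))
      (fun n => Nat.cast_nonneg n) CSOC.hs1
  have hE2 : ∀ i, Integrable (fun ω => (A i ω : ℝ) ^ 2) P ∧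
      ∫ ω, (A i ω : ℝ) ^ 2 ∂P = 1919 ^ 2 + 1919 :=
    fun i => CSOC.exp_eq P (hAmeas i) (hpp i) (fun n => (n : ℝ) ^ 2)
      (fun n => by positivity) CSOC.hs2'
  set S : Ω → ℝ := fun ω => ∑ i : Fin 14, (A i ω : ℝ) with hS
  have hSint : Integrable S P := integrable_finset_sum _ (fun i _ => (hE1 i).1)
  have hSval : ∫ ω, S ω ∂P = 26866 := by
    rw [hS, integral_finset_sum _ (fun i _ => (hE1 i).1)]
    rw [Finset.sum_congr rfl (fun i _ => (hE1 i).2)]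
    simp
    norm_num
  -- second moment
  have hindR : ∀ i j : Fin 14, i ≠ j → ProbabilityTheory.IndepFun
      (fun ω => (A i ω : ℝ)) (fun ω => (A j ω : ℝ)) P :=
    fun i j hij => (hindep.indepFun hij).comp measurable_from_nat measurable_from_nat
  have hPint : ∀ i j : Fin 14, Integrable (fun ω => (A i ω : ℝ) * (A j ω : ℝ)) P := by
    intro i j
    by_cases hij : i = j
    · subst hij
      simpa [pow_two] using (hE2 i).1
    · exact (hindR i j hij).integrable_mul (hE1 i).1 (hE1 j).1
  have hPval : ∀ i j : Fin 14, ∫ ω, (A i ω : ℝ) * (A j ω : ℝ) ∂P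
      = if i = j then 1919 ^ 2 + 1919 else 1919 ^ 2 := by
    intro i j
    by_cases hij : i = j
    · subst hij
      rw [if_pos rfl]
      simp only [← pow_two]
      exact (hE2 i).2
    · rw [if_neg hij]
      have h := (hindR i j hij).integral_mul_eq_mul_integral (hE1 i).1.aestronglyMeasurable
        (hE1 j).1.aestronglyMeasurable
      have h' : ∫ ω, (A i ω : ℝ) * (A j ω : ℝ) ∂P
          = (∫ ω, (A i ω : ℝ) ∂P) * ∫ ω, (A j ω : ℝ) ∂P := h
      rw [h', (hE1 i).2, (hE1 j).2]
      norm_num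
  have hS2int : Integrable (fun ω => S ω ^ 2) P := by
    have e : (fun ω => S ω ^ 2)
        = fun ω => ∑ i : Fin 14, ∑ j : Fin 14, (A i ω : ℝ) * (A j ω : ℝ) := by
      funext ω
      rw [hS, sq, Finset.sum_mul_sum]
    rw [e]
    exact integrable_finset_sum _ (fun i _ => integrable_finset_sum _ (fun j _ => hPint i j))
  have hS2val : ∫ ω, S ω ^ 2 ∂P = 26866 + 26866 ^ 2 := by
    have e : (fun ω => S ω ^ 2)
        = fun ω => ∑ i : Fin 14, ∑ j : Fin 14, (A i ω : ℝ) * (A j ω : ℝ) := by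
      funext ω
      rw [hS, sq, Finset.sum_mul_sum]
    rw [show ∫ ω, S ω ^ 2 ∂P
        = ∫ ω, ∑ i : Fin 14, ∑ j : Fin 14, (A i ω : ℝ) * (A j ω : ℝ) ∂P from by rw [← e]]
    rw [integral_finset_sum _ (fun i _ => integrable_finset_sum _ (fun j _ => hPint i j))]
    rw [Finset.sum_congr rfl (fun i _ =>
      integral_finset_sum _ (fun j _ => hPint i j))]
    rw [Finset.sum_congr rfl (fun i _ => Finset.sum_congr rfl (fun j _ => hPval i j))]
    have inner : ∀ i : Fin 14,
        ∑ j : Fin 14, (if i = j then (1919:ℝ) ^ 2 + 1919 else 1919 ^ 2)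
        = 14 * 1919 ^ 2 + 1919 := by
      intro i
      have e2 : ∀ j : Fin 14, (if i = j then (1919:ℝ) ^ 2 + 1919 else 1919 ^ 2)
          = 1919 ^ 2 + (if i = j then (1919:ℝ) else 0) := by
        intro j; split_ifs <;> ring
      rw [Finset.sum_congr rfl (fun j _ => e2 j), Finset.sum_add_distrib,
        Finset.sum_ite_eq Finset.univ i (fun _ => (1919:ℝ))]
      simp
    rw [Finset.sum_congr rfl (fun i _ => inner i)]
    simp
    norm_num
  have hVint : Integrable (fun ω => (26866 - S ω) ^ 2) P := by
    have e : (fun ω => (26866 - S ω) ^ 2)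
        = fun ω => (26866:ℝ) ^ 2 - 2 * 26866 * S ω + S ω ^ 2 := by
      funext ω; ring
    rw [e]
    exact ((integrable_const _).sub (hSint.const_mul _)).add hS2int
  have hVval : ∫ ω, (26866 - S ω) ^ 2 ∂P = 26866 := by
    have e : (fun ω => (26866 - S ω) ^ 2)
        = fun ω => (26866:ℝ) ^ 2 - 2 * 26866 * S ω + S ω ^ 2 := by
      funext ω; ring
    rw [show ∫ ω, (26866 - S ω) ^ 2 ∂P
        = ∫ ω, ((26866:ℝ) ^ 2 - 2 * 26866 * S ω + S ω ^ 2) ∂P from by rw [← e]]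
    have hint1 : Integrable (fun ω => (26866:ℝ) ^ 2 - 2 * 26866 * S ω) P :=
      (integrable_const _).sub (hSint.const_mul _)
    have hint2 : Integrable (fun ω => 2 * 26866 * S ω) P := hSint.const_mul _
    rw [integral_add hint1 hS2int, integral_sub (integrable_const _) hint2,
      integral_const, integral_const_mul, hSval, hS2val]
    simp
    norm_num
  -- a.e. lower bound on b 14
  have hb14 : ∀ᵐ ω ∂P, S ω - 22080 ≤ b 14 ω := by
    filter_upwards [hdsum] with ω hω
    set g : ℕ → ℝ := fun i =>
      if h : i < 14 then ((A ⟨i, h⟩ ω : ℝ) + 480 - d ⟨i, h⟩ ω) else 0 with hg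
    have key : ∀ n : ℕ, n ≤ 14 → ∑ i ∈ Finset.range n, g i ≤ b n ω := by
      intro n hn
      induction n with
      | zero => simp [hb0 ω]
      | succ m ih =>
        have hm : m < 14 := hn
        have ihm := ih (le_of_lt hm)
        have hrec := hb ⟨m, hm⟩ ω
        have hco : ((⟨m, hm⟩ : Fin 14) : ℕ) = m := rfl
        rw [hco] at hrec
        rw [Finset.sum_range_succ]
        have hgm : g m = (A ⟨m, hm⟩ ω : ℝ) + 480 - d ⟨m, hm⟩ ω := by
          rw [hg]; simp [hm]
        rw [hrec, hgm]
        have : b m ω + (A ⟨m, hm⟩ ω : ℝ) + 2400 - 1920 - d ⟨m, hm⟩ ω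
            ≤ max 0 (b m ω + (A ⟨m, hm⟩ ω : ℝ) + 2400 - 1920 - d ⟨m, hm⟩ ω) :=
          le_max_right _ _
        linarith
    have h14 := key 14 (le_refl 14)
    have hsum14 : ∑ i ∈ Finset.range 14, g i
        = ∑ i : Fin 14, ((A i ω : ℝ) + 480 - d i ω) := by
      rw [← Fin.sum_univ_eq_sum_range]
      apply Finset.sum_congr rfl
      intro i _
      rw [hg]
      simp [i.isLt]
    have hsplit : ∑ i : Fin 14, ((A i ω : ℝ) + 480 - d i ω)
        = S ω + 6720 - ∑ i, d i ω := by
      rw [hS, Finset.sum_sub_distrib, Finset.sum_add_distrib, Finset.sum_const,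
        Finset.card_univ]
      norm_num [Fintype.card_fin]
    have : S ω - 22080 ≤ ∑ i ∈ Finset.range 14, g i := by
      rw [hsum14, hsplit]; linarith
    linarith
  -- integrability of costf ∘ b 14
  have h14meas : Measurable fun ω => costf (b 14 ω) :=
    CSOC.costf_measurable.comp (hbmeas 14)
  have h14int : Integrable (fun ω => costf (b 14 ω)) P := by
    refine Integrable.mono' (integrable_const (1:ℝ)) h14meas.aestronglyMeasurable ?_
    filter_upwards with ω
    rw [Real.norm_eq_abs, abs_of_nonneg (CSOC.costf_nonneg _)]
    exact CSOC.costf_le_one _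
  have hlowint : Integrable (fun ω => 1 - (26866 - S ω) ^ 2 / 1384300) P :=
    (integrable_const _).sub (hVint.div_const _)
  have hmain : 19 / 20 ≤ ∫ ω, costf (b 14 ω) ∂P := by
    have hmono : ∫ ω, (1 - (26866 - S ω) ^ 2 / 1384300) ∂P ≤ ∫ ω, costf (b 14 ω) ∂P := by
      apply integral_mono_ae hlowint h14int
      filter_upwards [hb14] with ω hω
      have h := CSOC.costf_lb (x := b 14 ω) (y := S ω - 22080) hω
      have e : (4786 : ℝ) - (S ω - 22080) = 26866 - S ω := by ring
      rw [e] at h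
      exact h
    have hval : ∫ ω, (1 - (26866 - S ω) ^ 2 / 1384300) ∂P = 1 - 26866 / 1384300 := by
      rw [integral_sub (integrable_const _) (hVint.div_const _), integral_const,
        integral_div, hVval]
      simp
    rw [hval] at hmono
    refine le_trans ?_ hmono
    norm_num
  refine ⟨hmain, ?_⟩
  -- second part
  have hbdd : ∀ ω, BddAbove (Set.range fun t : Fin 14 => costf (b (t + 1) ω)) :=
    fun ω => (Set.finite_range _).bddAbove
  have hg_ge : ∀ ω, costf (b 14 ω) ≤ ⨆ t : Fin 14, costf (b (t + 1) ω) := by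
    intro ω
    have h := le_ciSup (hbdd ω) (13 : Fin 14)
    have e : (((13 : Fin 14) : ℕ) + 1) = 14 := rfl
    rw [e] at h
    exact h
  have hg_le : ∀ ω, (⨆ t : Fin 14, costf (b (t + 1) ω)) ≤ 1 :=
    fun ω => ciSup_le (fun t => CSOC.costf_le_one _)
  have hg_meas : Measurable fun ω => ⨆ t : Fin 14, costf (b (t + 1) ω) :=
    Measurable.iSup (fun t => CSOC.costf_measurable.comp (hbmeas _))
  have hg_int : Integrable (fun ω => ⨆ t : Fin 14, costf (b (t + 1) ω)) P := by
    refine Integrable.mono' (integrable_const (1:ℝ)) hg_meas.aestronglyMeasurable ?_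
    filter_upwards with ω
    rw [Real.norm_eq_abs, abs_of_nonneg (le_trans (CSOC.costf_nonneg _) (hg_ge ω))]
    exact hg_le ω
  have hmono2 : ∫ ω, costf (b 14 ω) ∂P ≤ ∫ ω, (⨆ t : Fin 14, costf (b (t + 1) ω)) ∂P :=
    integral_mono_ae h14int hg_int (Filter.Eventually.of_forall hg_ge)
  have : (0.95 : ℝ) ≤ ∫ ω, (⨆ t : Fin 14, costf (b (t + 1) ω)) ∂P := by
    calc (0.95 : ℝ) = 19 / 20 := by norm_num
    _ ≤ ∫ ω, costf (b 14 ω) ∂P := hmain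
    _ ≤ _ := hmono2
  linarith
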